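/- Let f(x) = (1/n)∑_{i=1}^n f_i(x) where each f_i is convex and L-smooth. Let x̃ and x be fixed points, and let i be drawn uniformly at random from {1,…,n}. Define the variance-reduced gradient estimator g = ∇f_i(x) − ∇f_i(x̃) + ∇f(x̃). Then E[‖g − ∇f(x)‖²] ≤ 2L ( f(x̃) − f(x) + ⟨∇f(x), x − x̃⟩ ). -/

import Mathlib

open RealInnerProductSpace

variable {E : Type*} [NormedAddCommGroup E] [InnerProductSpace ℝ E] [CompleteSpace E]

lemma inner_gradient_eq (h : E → ℝ) (z : E) (hd : DifferentiableAt ℝ h z) (v : E) :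
    ⟪gradient h z, v⟫ = fderiv ℝ h z v := by
  have h1 : HasFDerivAt h (InnerProductSpace.toDual ℝ E (gradient h z)) z :=
    hasGradientAt_iff_hasFDerivAt.mp hd.hasGradientAt
  rw [h1.fderiv, InnerProductSpace.toDual_apply_apply]

lemma line_hasDerivAt (h : E → ℝ) (hd : Differentiable ℝ h) (x v : E) (t : ℝ) :
    HasDerivAt (fun s : ℝ => h (x + s • v)) ⟪gradient h (x + t • v), v⟫ t := by
  have hc : HasDerivAt (fun s : ℝ => x + s • v) v t := by
    simpa using ((hasDerivAt_id t).smul_const v).const_add x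
  have := (hd (x + t • v)).hasFDerivAt.comp_hasDerivAt t hc
  rwa [inner_gradient_eq h _ (hd _)]

lemma convex_grad_ineq (h : E → ℝ) (hc : ConvexOn ℝ Set.univ h) (hd : Differentiable ℝ h)
    (x y : E) : h x + ⟪gradient h x, y - x⟫ ≤ h y := by
  set v := y - x with hv
  have hφ : ConvexOn ℝ Set.univ (fun s : ℝ => h (x + s • v)) := by
    have h0 := hc.comp_affineMap (AffineMap.lineMap x y)
    have heq : (h ∘ ⇑(AffineMap.lineMap x y)) = fun s : ℝ => h (x + s • v) := by
      funext s; simp [AffineMap.lineMap_apply, hv, add_comm]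
    rw [heq] at h0
    simpa using h0
  have hder := line_hasDerivAt h hd x v 0
  have hle := hφ.le_slope_of_hasDerivAt (Set.mem_univ (0:ℝ)) (Set.mem_univ (1:ℝ))
    zero_lt_one hder
  simp only [slope_def_field, zero_smul, add_zero, one_smul] at hle
  have hxy : x + v = y := by rw [hv]; abel
  rw [hxy] at hle
  have : (h y - h x) / (1 - 0) = h y - h x := by norm_num
  rw [this] at hle
  linarith

lemma descent_lemma (h : E → ℝ) {L : ℝ} (hL : 0 ≤ L) (hd : Differentiable ℝ h)
    (hlip : ∀ a b, ‖gradient h a - gradient h b‖ ≤ L * ‖a - b‖) (x z : E) :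
    h z ≤ h x + ⟪gradient h x, z - x⟫ + L / 2 * ‖z - x‖ ^ 2 := by
  set v := z - x with hv
  set φ' : ℝ → ℝ := fun t => ⟪gradient h (x + t • v), v⟫ with hφ'
  have hcontg : Continuous (gradient h) := by
    refine (LipschitzWith.of_dist_le_mul (K := L.toNNReal) ?_).continuous
    intro a b
    rw [dist_eq_norm, dist_eq_norm, Real.coe_toNNReal L hL]
    exact hlip a b
  have hcont : Continuous φ' := by
    exact Continuous.inner (hcontg.comp (by continuity)) continuous_const
  have hderiv : ∀ t ∈ Set.uIcc (0:ℝ) 1, HasDerivAt (fun s => h (x + s • v)) (φ' t) t :=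
    fun t _ => line_hasDerivAt h hd x v t
  have hint : IntervalIntegrable φ' MeasureTheory.volume 0 1 := hcont.intervalIntegrable 0 1
  have key : h z - h x = ∫ t in (0:ℝ)..1, φ' t := by
    have := intervalIntegral.integral_eq_sub_of_hasDerivAt hderiv hint
    rw [this]
    have h1 : x + (1:ℝ) • v = z := by rw [hv]; simp
    have h0 : x + (0:ℝ) • v = x := by simp
    rw [h1, h0]
  set c := ⟪gradient h x, v⟫ with hcinner
  have hb : ∀ t ∈ Set.Icc (0:ℝ) 1, φ' t ≤ c + (L * ‖v‖ ^ 2) * t := by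
    intro t ht
    have e1 : φ' t - c = ⟪gradient h (x + t • v) - gradient h x, v⟫ := by
      rw [hφ', hcinner]; simp [inner_sub_left]
    have e2 : ⟪gradient h (x + t • v) - gradient h x, v⟫ ≤
        ‖gradient h (x + t • v) - gradient h x‖ * ‖v‖ := real_inner_le_norm _ _
    have e3 : ‖gradient h (x + t • v) - gradient h x‖ ≤ L * (t * ‖v‖) := by
      have := hlip (x + t • v) x
      simpa [norm_smul, abs_of_nonneg ht.1] using this
    nlinarith [norm_nonneg v, ht.1]
  have hint2 : IntervalIntegrable (fun t => c + (L * ‖v‖ ^ 2) * t) MeasureTheory.volume 0 1 :=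
    (by continuity : Continuous fun t : ℝ => c + (L * ‖v‖ ^ 2) * t).intervalIntegrable 0 1
  have hmono := intervalIntegral.integral_mono_on zero_le_one hint hint2 hb
  have hval : (∫ t in (0:ℝ)..1, (c + (L * ‖v‖ ^ 2) * t)) = c + L / 2 * ‖v‖ ^ 2 := by
    rw [intervalIntegral.integral_add (intervalIntegrable_const)
      ((intervalIntegral.intervalIntegrable_id).const_mul _)]
    rw [intervalIntegral.integral_const, intervalIntegral.integral_const_mul, integral_id]
    simp; ring
  rw [hval] at hmono
  linarith [key, hmono]

lemma cocoercive (h : E → ℝ) {L : ℝ} (hL : 0 < L) (hc : ConvexOn ℝ Set.univ h)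
    (hd : Differentiable ℝ h) (hlip : ∀ a b, ‖gradient h a - gradient h b‖ ≤ L * ‖a - b‖)
    (x y : E) :
    ‖gradient h x - gradient h y‖ ^ 2 ≤ 2 * L * (h x - h y - ⟪gradient h y, x - y⟫) := by
  set G := gradient h x - gradient h y with hG
  set z := x - (1/L) • G with hz
  have h1 := convex_grad_ineq h hc hd y z
  have h2 := descent_lemma h hL.le hd hlip x z
  have ezx : z - x = -((1/L) • G) := by rw [hz]; abel
  have e1 : ⟪gradient h x, z - x⟫ = -((1/L) * ⟪gradient h x, G⟫) := by
    rw [ezx, inner_neg_right, real_inner_smul_right]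
  have e2 : ‖z - x‖ ^ 2 = (1/L)^2 * ‖G‖ ^ 2 := by
    rw [ezx, norm_neg, norm_smul]
    simp [abs_of_pos (by positivity : (0:ℝ) < 1/L), mul_pow]
  have ezy : z - y = (x - y) - (1/L) • G := by rw [hz]; abel
  have e3 : ⟪gradient h y, z - y⟫ = ⟪gradient h y, x - y⟫ - (1/L) * ⟪gradient h y, G⟫ := by
    rw [ezy, inner_sub_right, real_inner_smul_right]
  have e4 : ⟪gradient h x, G⟫ - ⟪gradient h y, G⟫ = ‖G‖ ^ 2 := by
    rw [← inner_sub_left, ← hG, real_inner_self_eq_norm_sq]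
  rw [e1, e2] at h2
  rw [e3] at h1
  have hL' : (0:ℝ) < 1/L := by positivity
  have e6 : 1/L * ⟪gradient h x, G⟫ - 1/L * ⟪gradient h y, G⟫ = 1/L * ‖G‖^2 := by
    rw [← mul_sub, e4]
  have I2 : 1/L * ‖G‖^2 - L/2 * ((1/L)^2 * ‖G‖^2) ≤
      h x - h y - ⟪gradient h y, x - y⟫ := by linarith
  have e7 : 1/L * ‖G‖^2 - L/2 * ((1/L)^2 * ‖G‖^2) = ‖G‖^2 / (2*L) := by
    field_simp; ring
  have I3 : ‖G‖^2 / (2*L) ≤ h x - h y - ⟪gradient h y, x - y⟫ := by linarith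
  calc ‖G‖^2 = 2*L * (‖G‖^2/(2*L)) := by field_simp
    _ ≤ 2*L * (h x - h y - ⟪gradient h y, x - y⟫) := by
        exact mul_le_mul_of_nonneg_left I3 (by positivity)

theorem svrg_variance_bound {d n : ℕ} (hn : 0 < n)
    (fi : Fin n → EuclideanSpace ℝ (Fin d) → ℝ) (L : ℝ) (hL : 0 < L)
    (hconv : ∀ i, ConvexOn ℝ Set.univ (fi i))
    (hdiff : ∀ i, Differentiable ℝ (fi i))
    (hlip : ∀ i x y, ‖gradient (fi i) x - gradient (fi i) y‖ ≤ L * ‖x - y‖)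
    (f : EuclideanSpace ℝ (Fin d) → ℝ)
    (hf : f = fun x => (1 / (n : ℝ)) * ∑ i, fi i x)
    (xt x : EuclideanSpace ℝ (Fin d))
    (g : Fin n → EuclideanSpace ℝ (Fin d))
    (hg : ∀ i, g i = gradient (fi i) x - gradient (fi i) xt + gradient f xt) :
    (1 / (n : ℝ)) * ∑ i, ‖g i - gradient f x‖ ^ 2 ≤
      2 * L * (f xt - f x + ⟪gradient f x, x - xt⟫) := by
  have hn' : (0:ℝ) < n := Nat.cast_pos.mpr hn
  have hgradf : ∀ z, HasGradientAt f ((1/(n:ℝ)) • ∑ i, gradient (fi i) z) z := by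
    intro z
    rw [hasGradientAt_iff_hasFDerivAt]
    have hsum : HasFDerivAt (fun w => ∑ i, fi i w) (∑ i, fderiv ℝ (fi i) z) z :=
      HasFDerivAt.fun_sum (fun i _ => (hdiff i z).hasFDerivAt)
    have hmul := hsum.const_mul (1/(n:ℝ))
    rw [hf]
    convert hmul using 1
    case e'_9 => rfl
    rw [map_smul, map_sum]
    congr 1
    exact Finset.sum_congr rfl fun i _ =>
      (hasGradientAt_iff_hasFDerivAt.mp (hdiff i z).hasGradientAt).fderiv.symm
  have hgf : ∀ z, gradient f z = (1/(n:ℝ)) • ∑ i, gradient (fi i) z :=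
    fun z => (hgradf z).gradient
  set a : Fin n → EuclideanSpace ℝ (Fin d) :=
    fun i => gradient (fi i) x - gradient (fi i) xt with ha
  set abar := gradient f x - gradient f xt with habar
  have habar' : (n:ℝ) • abar = ∑ i, a i := by
    rw [habar, hgf, hgf, ← smul_sub, smul_smul]
    rw [mul_one_div, div_self hn'.ne', one_smul, ← Finset.sum_sub_distrib]
  have hgd : ∀ i, g i - gradient f x = a i - abar := by
    intro i; rw [hg i, habar]; simp only [ha]; abel
  have hexp : ∑ i, ‖g i - gradient f x‖^2 ≤ ∑ i, ‖a i‖^2 := by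
    have e : ∀ i, ‖g i - gradient f x‖^2 = ‖a i‖^2 - 2*⟪a i, abar⟫ + ‖abar‖^2 := by
      intro i; rw [hgd i, norm_sub_sq_real]
    rw [Finset.sum_congr rfl (fun i _ => e i), Finset.sum_add_distrib,
      Finset.sum_sub_distrib, ← Finset.mul_sum, ← sum_inner, ← habar',
      real_inner_smul_left, real_inner_self_eq_norm_sq, Finset.sum_const,
      Finset.card_univ, Fintype.card_fin, nsmul_eq_mul]
    nlinarith [mul_nonneg hn'.le (sq_nonneg ‖abar‖)]
  have hco : ∀ i, ‖a i‖^2 ≤ 2*L*(fi i xt - fi i x - ⟪gradient (fi i) x, xt - x⟫) := by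
    intro i
    have hrev : ‖a i‖ = ‖gradient (fi i) xt - gradient (fi i) x‖ := by
      rw [ha]; exact norm_sub_rev _ _
    rw [hrev]
    exact cocoercive (fi i) hL (hconv i) (hdiff i) (hlip i) xt x
  have hsum2 : ∑ i, ‖a i‖^2 ≤
      2*L*((∑ i, fi i xt) - (∑ i, fi i x) + ∑ i, ⟪gradient (fi i) x, x - xt⟫) := by
    have step := Finset.sum_le_sum (fun i (_ : i ∈ Finset.univ) => hco i)
    refine step.trans_eq ?_
    rw [← Finset.mul_sum]
    congr 1
    rw [Finset.sum_sub_distrib, Finset.sum_sub_distrib]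
    have : ∀ i : Fin n, ⟪gradient (fi i) x, xt - x⟫ = -⟪gradient (fi i) x, x - xt⟫ := by
      intro i; rw [← neg_sub, inner_neg_right]
    rw [Finset.sum_congr rfl (fun i _ => this i), Finset.sum_neg_distrib]
    ring
  have hinner : ⟪gradient f x, x - xt⟫ = (1/(n:ℝ)) * ∑ i, ⟪gradient (fi i) x, x - xt⟫ := by
    rw [hgf, real_inner_smul_left, sum_inner]
  have hfx : f x = (1/(n:ℝ)) * ∑ i, fi i x := by rw [hf]
  have hfxt : f xt = (1/(n:ℝ)) * ∑ i, fi i xt := by rw [hf]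
  calc (1 / (n : ℝ)) * ∑ i, ‖g i - gradient f x‖ ^ 2
      ≤ (1 / (n : ℝ)) * ∑ i, ‖a i‖^2 :=
        mul_le_mul_of_nonneg_left hexp (by positivity)
    _ ≤ (1 / (n : ℝ)) * (2*L*((∑ i, fi i xt) - (∑ i, fi i x) +
          ∑ i, ⟪gradient (fi i) x, x - xt⟫)) :=
        mul_le_mul_of_nonneg_left hsum2 (by positivity)
    _ = 2 * L * (f xt - f x + ⟪gradient f x, x - xt⟫) := by
        rw [hinner, hfx, hfxt]; ring
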